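/- For any Parseval frame Φ for F^N with M vectors, NE_2(Φ) = ∑_{|K|=2} ||Φ_K||_* satisfies NE_2(Φ)² ≤ (M(M−1)/2)·(N(M−1) + 2V_2(Φ)), where V_2(Φ) = ∑_{i<j} sqrt(det(Φ_{{i,j}}*Φ_{{i,j}})), with equality if and only if ||Φ_K||_* is constant over all two-element subsets K. -/

import Mathlib

open Matrix Finset


noncomputable def colSub {N M : ℕ} (Φ : Matrix (Fin N) (Fin M) ℂ) (K : Finset (Fin M)) :
    Matrix (Fin N) ↥K ℂ := Φ.submatrix id (fun k => (k : Fin M))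

/-- The k-dimensional volume of the parallelotope spanned by the columns of Φ indexed by K. -/
noncomputable def vol {N M : ℕ} (Φ : Matrix (Fin N) (Fin M) ℂ) (K : Finset (Fin M)) : ℝ :=
  Real.sqrt (((colSub Φ K)ᴴ * colSub Φ K).det.re)


/-- The nuclear norm: the sum of the singular values, i.e. of the square roots of the
eigenvalues of Aᴴ * A. -/
noncomputable def nuclearNorm {m n : Type*} [Fintype m] [Fintype n] [DecidableEq n]
    (A : Matrix m n ℂ) : ℝ :=
  ∑ i, Real.sqrt ((Matrix.isHermitian_conjTranspose_mul_self A).eigenvalues i)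

lemma cs_with_eq {α : Type*} (s : Finset α) (f : α → ℝ) :
    ((∑ i ∈ s, f i)^2 ≤ (s.card : ℝ) * ∑ i ∈ s, f i ^ 2) ∧
    ((∑ i ∈ s, f i)^2 = (s.card : ℝ) * ∑ i ∈ s, f i ^ 2 ↔ ∃ c, ∀ i ∈ s, f i = c) := by
  rcases s.eq_empty_or_nonempty with rfl | hne
  · simp
  · have hn : (0:ℝ) < s.card := by positivity
    set c : ℝ := (∑ i ∈ s, f i) / s.card with hc
    have key : (s.card : ℝ) * ∑ i ∈ s, f i ^ 2 - (∑ i ∈ s, f i)^2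
        = (s.card : ℝ) * ∑ i ∈ s, (f i - c)^2 := by
      have e1 : ∀ i ∈ s, (f i - c)^2 = f i ^ 2 - 2 * c * f i + c ^ 2 := fun i _ => by ring
      have expand : ∑ i ∈ s, (f i - c)^2
          = ∑ i ∈ s, f i ^ 2 - 2 * c * (∑ i ∈ s, f i) + (s.card : ℝ) * c^2 := by
        rw [Finset.sum_congr rfl e1, Finset.sum_add_distrib, Finset.sum_sub_distrib,
          Finset.sum_const, ← Finset.mul_sum, nsmul_eq_mul]
      rw [expand, hc]
      field_simp
      ring
    have hnn : 0 ≤ ∑ i ∈ s, (f i - c)^2 := by positivity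
    constructor
    · nlinarith
    · constructor
      · intro heq
        refine ⟨c, fun i hi => ?_⟩
        have h0 : ∑ i ∈ s, (f i - c)^2 = 0 := by nlinarith
        have h3 := (Finset.sum_eq_zero_iff_of_nonneg (fun i _ => sq_nonneg _)).mp h0 i hi
        have : f i - c = 0 := by nlinarith
        linarith
      · rintro ⟨c', hc'⟩
        have h2 : ∀ i ∈ s, f i ^ 2 = c' ^ 2 := fun i hi => by rw [hc' i hi]
        have h1 : ∑ i ∈ s, f i = (s.card : ℝ) * c' := by
          rw [Finset.sum_congr rfl hc', Finset.sum_const, nsmul_eq_mul]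
        have h2' : ∑ i ∈ s, f i ^ 2 = (s.card : ℝ) * c' ^ 2 := by
          rw [Finset.sum_congr rfl h2, Finset.sum_const, nsmul_eq_mul]
        rw [h1, h2']; ring

lemma trace_eq_sum_eigen {n : Type*} [Fintype n] [DecidableEq n] {A : Matrix n n ℂ}
    (hA : A.IsHermitian) : A.trace = ∑ i, (hA.eigenvalues i : ℂ) := by
  conv_lhs => rw [hA.spectral_theorem]
  rw [Unitary.conjStarAlgAut_apply, trace_mul_cycle,
    show (star (hA.eigenvectorUnitary : Matrix n n ℂ)) * (hA.eigenvectorUnitary : Matrix n n ℂ) = 1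
      from (Matrix.mem_unitaryGroup_iff').mp hA.eigenvectorUnitary.2,
    one_mul, trace_diagonal]
  rfl

lemma nuclear_sq {m n : Type*} [Fintype m] [Fintype n] [DecidableEq n]
    (A : Matrix m n ℂ) (hcard : Fintype.card n = 2) :
    (nuclearNorm A)^2 = ((Aᴴ * A).trace).re + 2 * Real.sqrt (((Aᴴ * A).det).re) := by
  obtain ⟨x, y, hxy, huniv⟩ := Finset.card_eq_two.mp
    (show (Finset.univ : Finset n).card = 2 by simp [hcard])
  set hH := Matrix.isHermitian_conjTranspose_mul_self A
  have hnn : ∀ i, 0 ≤ hH.eigenvalues i :=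
    Matrix.eigenvalues_conjTranspose_mul_self_nonneg A
  have htrace : ((Aᴴ * A).trace).re = hH.eigenvalues x + hH.eigenvalues y := by
    rw [trace_eq_sum_eigen hH, huniv, Finset.sum_pair hxy]
    simp [Complex.add_re]
  have hdet : ((Aᴴ * A).det).re = hH.eigenvalues x * hH.eigenvalues y := by
    rw [hH.det_eq_prod_eigenvalues, huniv, Finset.prod_pair hxy]
    simp [← Complex.ofReal_mul]
  have hsum : nuclearNorm A = Real.sqrt (hH.eigenvalues x) + Real.sqrt (hH.eigenvalues y) := by
    rw [nuclearNorm, huniv, Finset.sum_pair hxy]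
  rw [hsum, htrace, hdet, Real.sqrt_mul (hnn x), add_sq, Real.sq_sqrt (hnn x),
    Real.sq_sqrt (hnn y)]
  ring

lemma card_filter_mem (M : ℕ) (k : Fin M) :
    (((Finset.powersetCard 2 (Finset.univ : Finset (Fin M)))).filter (fun K => k ∈ K)).card
      = M - 1 := by
  rw [show M - 1 = ((Finset.univ : Finset (Fin M)).erase k).card by
    rw [Finset.card_erase_of_mem (Finset.mem_univ k), Finset.card_univ, Fintype.card_fin]]
  symm
  apply Finset.card_bij (fun j _ => ({k, j} : Finset (Fin M)))
  · intro j hj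
    have hjk : j ≠ k := Finset.ne_of_mem_erase hj
    simp only [Finset.mem_filter, Finset.mem_powersetCard]
    refine ⟨⟨Finset.subset_univ _, ?_⟩, Finset.mem_insert_self _ _⟩
    rw [Finset.card_insert_of_notMem (by simp [hjk.symm]), Finset.card_singleton]
  · intro j hj j' hj' heq
    have hjk : j ≠ k := Finset.ne_of_mem_erase hj
    have : j ∈ ({k, j'} : Finset (Fin M)) := heq ▸ by simp
    simpa [hjk] using this
  · intro K hK
    simp only [Finset.mem_filter, Finset.mem_powersetCard] at hK
    obtain ⟨⟨-, hcard⟩, hk⟩ := hK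
    have h1 : (K.erase k).card = 1 := by
      rw [Finset.card_erase_of_mem hk, hcard]
    obtain ⟨j, hj⟩ := Finset.card_eq_one.mp h1
    have hjk : j ∈ K.erase k := hj ▸ Finset.mem_singleton_self j
    refine ⟨j, Finset.mem_erase.mpr ⟨Finset.ne_of_mem_erase hjk, Finset.mem_univ j⟩, ?_⟩
    rw [show ({k, j} : Finset (Fin M)) = insert k {j} from rfl, ← hj, Finset.insert_erase hk]

lemma sum_pairs (M : ℕ) (g : Fin M → ℝ) :
    ∑ K ∈ Finset.powersetCard 2 (Finset.univ : Finset (Fin M)), ∑ k ∈ K, g k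
      = ((M - 1 : ℕ) : ℝ) * ∑ k, g k := by
  have step1 : ∀ K ∈ Finset.powersetCard 2 (Finset.univ : Finset (Fin M)),
      ∑ k ∈ K, g k = ∑ k : Fin M, if k ∈ K then g k else 0 := by
    intro K _
    rw [Finset.sum_ite_mem, Finset.univ_inter]
  rw [Finset.sum_congr rfl step1, Finset.sum_comm]
  have step2 : ∀ k : Fin M,
      ∑ K ∈ Finset.powersetCard 2 (Finset.univ : Finset (Fin M)), (if k ∈ K then g k else 0)
        = ((M - 1 : ℕ) : ℝ) * g k := by
    intro k
    rw [Finset.sum_ite, Finset.sum_const, Finset.sum_const_zero, add_zero, card_filter_mem,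
      nsmul_eq_mul]
  rw [Finset.sum_congr rfl (fun k _ => step2 k), ← Finset.mul_sum]

/-- The 2-nuclear energy bound: NE₂(Φ)² ≤ (M(M−1)/2)·(N(M−1) + 2V₂(Φ)) for a Parseval frame,
with equality iff the nuclear norms of all two-element subsets agree. -/
theorem nuclear_energy_two_bound {N M : ℕ}
    (Φ : Matrix (Fin N) (Fin M) ℂ) (hΦ : Φ * Φᴴ = 1) :
    ((∑ K ∈ Finset.powersetCard 2 (Finset.univ : Finset (Fin M)),
          nuclearNorm (colSub Φ K)) ^ 2 ≤
        ((M : ℝ) * ((M : ℝ) - 1) / 2) * ((N : ℝ) * ((M : ℝ) - 1) +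
          2 * ∑ K ∈ Finset.powersetCard 2 (Finset.univ : Finset (Fin M)), vol Φ K)) ∧
      (((∑ K ∈ Finset.powersetCard 2 (Finset.univ : Finset (Fin M)),
            nuclearNorm (colSub Φ K)) ^ 2 =
          ((M : ℝ) * ((M : ℝ) - 1) / 2) * ((N : ℝ) * ((M : ℝ) - 1) +
            2 * ∑ K ∈ Finset.powersetCard 2 (Finset.univ : Finset (Fin M)), vol Φ K)) ↔
        ∃ c : ℝ, ∀ K ∈ Finset.powersetCard 2 (Finset.univ : Finset (Fin M)),
          nuclearNorm (colSub Φ K) = c) := by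
  set S := Finset.powersetCard 2 (Finset.univ : Finset (Fin M)) with hS
  set f : Finset (Fin M) → ℝ := fun K => nuclearNorm (colSub Φ K) with hf
  set g : Fin M → ℝ := fun k => ((Φᴴ * Φ) k k).re with hg
  -- trace of the Gram matrix of a pair equals the sum of diagonal Gram entries
  have htr : ∀ K : Finset (Fin M),
      (((colSub Φ K)ᴴ * colSub Φ K).trace).re = ∑ k ∈ K, g k := by
    intro K
    have hentry : ∀ i : ↥K, (((colSub Φ K)ᴴ * colSub Φ K) i i) = (Φᴴ * Φ) (i : Fin M) (i : Fin M) := by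
      intro i
      simp [Matrix.mul_apply, Matrix.conjTranspose_apply, colSub]
    rw [Matrix.trace, Complex.re_sum]
    calc ∑ i : ↥K, (((colSub Φ K)ᴴ * colSub Φ K).diag i).re
        = ∑ i : ↥K, g (i : Fin M) := by
          refine Finset.sum_congr rfl fun i _ => ?_
          rw [Matrix.diag_apply, hentry i]
      _ = ∑ k ∈ K, g k := Finset.sum_coe_sort K g
  -- total diagonal Gram sum is N
  have hgsum : ∑ k, g k = (N : ℝ) := by
    have h1 : (Φᴴ * Φ).trace = (N : ℂ) := by
      rw [Matrix.trace_mul_comm, hΦ, Matrix.trace_one]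
      simp
    have h2 : ((Φᴴ * Φ).trace).re = (N : ℝ) := by rw [h1]; simp
    rw [← h2, Matrix.trace, Complex.re_sum]
    rfl
  -- sum of squared nuclear norms
  have hsq : ∀ K ∈ S, f K ^ 2 = (((colSub Φ K)ᴴ * colSub Φ K).trace).re + 2 * vol Φ K := by
    intro K hK
    have hKcard : Fintype.card ↥K = 2 := by
      rw [Fintype.card_coe]
      exact (Finset.mem_powersetCard.mp hK).2
    exact nuclear_sq (colSub Φ K) hKcard
  have htotal : ∑ K ∈ S, f K ^ 2 = (N : ℝ) * ((M : ℝ) - 1) + 2 * ∑ K ∈ S, vol Φ K := by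
    rw [Finset.sum_congr rfl hsq, Finset.sum_add_distrib,
      Finset.sum_congr rfl (fun K _ => htr K), sum_pairs M g, hgsum, ← Finset.mul_sum]
    congr 1
    rcases M with - | M'
    · -- M = 0 : N must be 0 since the Fin 0 sum is empty
      have : (N : ℝ) = 0 := by
        rw [← hgsum]
        simp
      rw [this]; ring
    · push_cast
      ring
  have hcardS : ((S.card : ℕ) : ℝ) = (M : ℝ) * ((M : ℝ) - 1) / 2 := by
    rw [hS, Finset.card_powersetCard, Finset.card_univ, Fintype.card_fin, Nat.cast_choose_two]
  obtain ⟨hle, hiff⟩ := cs_with_eq S f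
  have hRHS : ((M : ℝ) * ((M : ℝ) - 1) / 2) * ((N : ℝ) * ((M : ℝ) - 1) +
      2 * ∑ K ∈ S, vol Φ K) = (S.card : ℝ) * ∑ K ∈ S, f K ^ 2 := by
    rw [hcardS, htotal]
  rw [hRHS]
  exact ⟨hle, hiff⟩
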